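/- Let g be a finite-dimensional real nilpotent Lie algebra with dim g ≥ 2 which admits a nondegenerate symmetric bilinear form B satisfying B(⁅x,y⁆,z) = B(x,⁅y,z⁆) for all x,y,z ∈ g. Then the center of g has dimension at least 2. -/

import Mathlib

open Module


/-- A finite-dimensional real nilpotent Lie algebra of dimension at least 2
carrying a nondegenerate, symmetric, ad-invariant bilinear form has center of dimension at
least 2. -/
theorem center_dim_ge_two_of_nilpotent_metric
    (L : Type*) [LieRing L] [LieAlgebra ℝ L] [FiniteDimensional ℝ L]
    [LieRing.IsNilpotent L]
    (hdim : 2 ≤ Module.finrank ℝ L)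
    (B : LinearMap.BilinForm ℝ L)
    (hBnd : B.Nondegenerate)
    (hBsymm : ∀ x y : L, B x y = B y x)
    (hBad : ∀ x y z : L, B ⁅x, y⁆ z = B x ⁅y, z⁆) :
    2 ≤ Module.finrank ℝ (LieAlgebra.center ℝ L).toSubmodule := by
  classical
  set n := Module.finrank ℝ L with hn
  set D : LieIdeal ℝ L := ⁅(⊤ : LieIdeal ℝ L), (⊤ : LieIdeal ℝ L)⁆ with hDdef
  have hrefl : B.IsRefl := fun x y h => by rw [hBsymm]; exact h
  -- the center is the orthogonal complement of D
  have hZ : (LieAlgebra.center ℝ L).toSubmodule = B.orthogonal D.toSubmodule := by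
    ext x
    simp only [LieSubmodule.mem_toSubmodule, LieModule.mem_maxTrivSubmodule,
      LinearMap.BilinForm.mem_orthogonal_iff]
    constructor
    · intro hx m hm
      have hsub : D.toSubmodule ≤ LinearMap.ker (B.flip x) := by
        rw [hDdef, LieSubmodule.lieIdeal_oper_eq_linear_span']
        rw [Submodule.span_le]
        rintro m ⟨a, -, b, -, rfl⟩
        have : B ⁅a, b⁆ x = 0 := by rw [hBad a b x, hx b]; simp
        simpa using this
      have := hsub hm
      simpa [LinearMap.BilinForm.IsOrtho] using this
    · intro hx y
      apply hBnd.1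
      intro z
      rw [hBsymm, ← hBad z y x]
      exact hx _ (LieSubmodule.lie_mem_lie (LieSubmodule.mem_top z) (LieSubmodule.mem_top y))
  have horth := LinearMap.BilinForm.finrank_orthogonal hBnd D.toSubmodule
  rw [hZ, horth]
  have hDle : finrank ℝ D.toSubmodule ≤ n := Submodule.finrank_le _
  by_contra hcon
  push_neg at hcon
  have hlow : n - 1 ≤ finrank ℝ D.toSubmodule := by omega
  -- find x with span {x} ⊔ D = ⊤
  obtain ⟨x, hxsup⟩ : ∃ x : L, Submodule.span ℝ {x} ⊔ D.toSubmodule = ⊤ := by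
    by_cases hDtop : D.toSubmodule = ⊤
    · exact ⟨0, by simp [hDtop]⟩
    · obtain ⟨x, hx⟩ : ∃ x, x ∉ D.toSubmodule := by
        by_contra h
        push_neg at h
        exact hDtop (Submodule.eq_top_iff'.mpr h)
      refine ⟨x, ?_⟩
      have hlt : D.toSubmodule < Submodule.span ℝ {x} ⊔ D.toSubmodule := by
        refine lt_of_le_of_ne le_sup_right fun h => hx ?_
        rw [h]
        exact Submodule.mem_sup_left (Submodule.mem_span_singleton_self x)
      have h1 : finrank ℝ D.toSubmodule < finrank ℝ ↥(Submodule.span ℝ {x} ⊔ D.toSubmodule) :=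
        Submodule.finrank_lt_finrank_of_lt hlt
      have h2 : finrank ℝ ↥(Submodule.span ℝ {x} ⊔ D.toSubmodule) ≤ n := Submodule.finrank_le _
      exact Submodule.eq_top_of_finrank_eq (by omega)
  -- Nakayama-type induction
  have key : ∀ k, D ≤ LieModule.lowerCentralSeries ℝ L L (k + 1) := by
    intro k
    induction k with
    | zero =>
      rw [hDdef]
      rw [LieModule.lowerCentralSeries_succ]
      simp
    | succ k ih =>
      rw [hDdef, LieSubmodule.lie_le_iff]
      intro a _ b _
      obtain ⟨sa, hsa, da, hda, rfl⟩ := Submodule.mem_sup.mp (hxsup ▸ Submodule.mem_top (x := a))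
      obtain ⟨sb, hsb, db, hdb, rfl⟩ := Submodule.mem_sup.mp (hxsup ▸ Submodule.mem_top (x := b))
      obtain ⟨s, rfl⟩ := Submodule.mem_span_singleton.mp hsa
      obtain ⟨t, rfl⟩ := Submodule.mem_span_singleton.mp hsb
      have hmem : ∀ c : L, ∀ d ∈ D, ⁅c, d⁆ ∈ LieModule.lowerCentralSeries ℝ L L (k + 2) := by
        intro c d hd
        rw [LieModule.lowerCentralSeries_succ]
        exact LieSubmodule.lie_mem_lie (LieSubmodule.mem_top c) (ih hd)
      have h1 : ⁅s • x, t • x⁆ = (0 : L) := by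
        simp
      have expand : ⁅s • x + da, t • x + db⁆ =
          ⁅s • x, t • x⁆ + ⁅s • x, db⁆ + (⁅da, t • x⁆ + ⁅da, db⁆) := by
        rw [add_lie, lie_add, lie_add]
      rw [expand, h1, zero_add]
      refine add_mem (hmem _ _ hdb) (add_mem ?_ (hmem _ _ hdb))
      rw [← lie_skew]
      exact neg_mem (hmem _ _ hda)
  obtain ⟨k, hk⟩ := LieModule.IsNilpotent.nilpotent ℝ L L
  have hDbot : D = ⊥ := by
    have h1 := key k
    have h2 : LieModule.lowerCentralSeries ℝ L L (k + 1) ≤ LieModule.lowerCentralSeries ℝ L L k :=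
      LieModule.antitone_lowerCentralSeries ℝ L L (Nat.le_succ k)
    exact le_bot_iff.mp (hk ▸ h1.trans h2)
  have : finrank ℝ D.toSubmodule = 0 := by
    rw [hDbot, LieSubmodule.bot_toSubmodule, finrank_bot]
  omega
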